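/- arXiv:2307.14545 — 2 statements merged into one kernel-verified Lean document; each statement's English description precedes it below -/
import Mathlib

section
/- Let p(x) = exp(−φ(x)) be a differentiable probability density on ℝ^d with finite positive-definite expected Hessian E[H_φ(x)], and let f: ℝ^d → ℝ be differentiable with E[∇f(x)] well-defined, such that f(x)p(x − θ) → 0 as ‖x‖ → ∞ for every fixed θ. Then Var(f(x)) ≥ (E[∇f(x)])^T (E[H_φ(x)])^{−1} (E[∇f(x)]). -/
open MeasureTheory Matrix

variable {d : ℕ}

/-- Partial derivative of `g : ℝ^d → ℝ` in the `i`-th coordinate direction. -/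
noncomputable def pd (g : EuclideanSpace ℝ (Fin d) → ℝ) (i : Fin d)
    (x : EuclideanSpace ℝ (Fin d)) : ℝ :=
  fderiv ℝ g x (EuclideanSpace.single i (1 : ℝ))

/-- The Hessian matrix of `g` at `x`, as a matrix of iterated partial derivatives. -/
noncomputable def hess (g : EuclideanSpace ℝ (Fin d) → ℝ)
    (x : EuclideanSpace ℝ (Fin d)) : Matrix (Fin d) (Fin d) ℝ :=
  Matrix.of fun i j => pd (pd g j) i x

section AuxCR
open Filter Set


/-- Tail integrals of an integrable function tend to zero. -/
lemma tail_tendsto_zero (h : ℝ → ℝ) (hh : Integrable h) :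
    Tendsto (fun S => ∫ x in Set.Ioi S, h x) atTop (nhds 0) := by
  have hIoi : IntegrableOn h (Set.Ioi 0) := hh.integrableOn
  have h1 : Tendsto (fun S : ℝ => ∫ x in (0:ℝ)..S, h x) atTop
      (nhds (∫ x in Set.Ioi (0:ℝ), h x)) :=
    intervalIntegral_tendsto_integral_Ioi 0 hIoi tendsto_id
  have h2 : ∀ᶠ S : ℝ in atTop, (∫ x in Set.Ioi S, h x)
      = (∫ x in Set.Ioi (0:ℝ), h x) - ∫ x in (0:ℝ)..S, h x := by
    filter_upwards [eventually_ge_atTop (0:ℝ)] with S hS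
    have hsplit : (∫ x in Set.Ioc 0 S, h x) + (∫ x in Set.Ioi S, h x)
        = ∫ x in Set.Ioi (0:ℝ), h x := by
      rw [← setIntegral_union]
      · rw [Set.Ioc_union_Ioi_eq_Ioi hS]
      · exact Set.Ioc_disjoint_Ioi le_rfl
      · exact measurableSet_Ioi
      · exact hh.integrableOn
      · exact hh.integrableOn
    rw [intervalIntegral.integral_of_le hS]
    linarith
  have := (tendsto_const_nhds (x := (∫ x in Set.Ioi (0:ℝ), h x)) (f := atTop)).sub h1
  rw [sub_self] at this
  exact this.congr' (h2.mono fun S hS => hS.symm)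


lemma integrable_forces (q : ℝ → ℝ) (hqi : Integrable q) (A c : ℝ) (hc : 0 < c)
    (hq : ∀ t, A ≤ t → c ≤ |q t|) : False := by
  have h1 : IntegrableOn (fun _ => c) (Set.Ioi A) volume := by
    refine Integrable.mono' hqi.norm.integrableOn aestronglyMeasurable_const ?_
    refine (ae_restrict_iff' measurableSet_Ioi).2 (ae_of_all _ fun x hx => ?_)
    simpa [Real.norm_eq_abs, abs_of_pos hc] using hq x hx.le
  rcases integrable_const_iff.1 h1 with h | h
  · exact hc.ne' h
  · rw [isFiniteMeasure_restrict, Real.volume_Ioi] at h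
    exact h rfl

lemma integrable_comp_neg {g : ℝ → ℝ} (hg : Integrable g) :
    Integrable fun t => g (-t) :=
  ((Measure.measurePreserving_neg (volume : Measure ℝ)).integrable_comp_emb
    (Homeomorph.neg ℝ).measurableEmbedding).mpr hg

lemma hasDerivAt_comp_neg {g g' : ℝ → ℝ} (hg : ∀ t, HasDerivAt g (g' t) t) (t : ℝ) :
    HasDerivAt (fun s => g (-s)) (-g' (-t)) t := by
  have := (hg (-t)).comp t (hasDerivAt_neg t)
  simpa [Function.comp_def, mul_comm] using this

/-- If `q > 0` is integrable with `q'' ≥ -h`, `h ≥ 0` integrable, then `q' → 0` at `+∞`. -/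
lemma deriv_tendsto_zero_atTop (q q' q'' h : ℝ → ℝ)
    (hd1 : ∀ t, HasDerivAt q (q' t) t) (hd2 : ∀ t, HasDerivAt q' (q'' t) t)
    (hq''c : Continuous q'')
    (hq0 : ∀ t, 0 < q t) (hqi : Integrable q)
    (hh : Integrable h) (hh0 : ∀ t, 0 ≤ h t) (hbd : ∀ t, -h t ≤ q'' t) :
    Tendsto q' atTop (nhds 0) := by
  have hq'c : Continuous q' :=
    continuous_iff_continuousAt.2 fun t => (hd2 t).differentiableAt.continuousAt
  -- key inequality
  have key : ∀ S T, S ≤ T → q' S - (∫ x in Set.Ioi S, h x) ≤ q' T := by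
    intro S T hST
    have hftc : ∫ x in S..T, q'' x = q' T - q' S :=
      intervalIntegral.integral_eq_sub_of_hasDerivAt (fun x _ => hd2 x)
        (hq''c.intervalIntegrable S T)
    have hlow : ∫ x in S..T, (-h x) ≤ ∫ x in S..T, q'' x :=
      intervalIntegral.integral_mono_on hST (hh.neg.intervalIntegrable)
        (hq''c.intervalIntegrable S T) (fun x _ => hbd x)
    have hng : (∫ x in S..T, (-h x)) = -∫ x in Set.Ioc S T, h x := by
      rw [intervalIntegral.integral_neg, intervalIntegral.integral_of_le hST]
    have hmono : (∫ x in Set.Ioc S T, h x) ≤ ∫ x in Set.Ioi S, h x := by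
      refine setIntegral_mono_set hh.integrableOn ?_ ?_
      · exact (ae_restrict_iff' measurableSet_Ioi).2 (ae_of_all _ fun x _ => hh0 x)
      · exact HasSubset.Subset.eventuallyLE Set.Ioc_subset_Ioi_self
    have := hng ▸ hlow
    rw [hftc] at this
    linarith
  rw [NormedAddCommGroup.tendsto_nhds_zero]
  intro ε hε
  have htail := (tail_tendsto_zero h hh).eventually_lt_const (show (0:ℝ) < ε/2 by linarith)
  obtain ⟨S₀, hS₀⟩ := eventually_atTop.1 htail
  have htail0 : ∀ S, 0 ≤ ∫ x in Set.Ioi S, h x := fun S =>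
    setIntegral_nonneg measurableSet_Ioi fun x _ => hh0 x
  -- claim a : q' S < ε for all S ≥ S₀
  have claimA : ∀ S, S₀ ≤ S → q' S < ε := by
    intro S hS
    by_contra hcon
    push_neg at hcon
    have hlarge : ∀ T, S ≤ T → ε/2 ≤ q' T := by
      intro T hT
      have := key S T hT
      have h2 := hS₀ S hS
      linarith
    have hgrow : ∀ T, S ≤ T → q S + (T - S) * (ε/2) ≤ q T := by
      intro T hT
      have hftc : ∫ x in S..T, q' x = q T - q S :=
        intervalIntegral.integral_eq_sub_of_hasDerivAt (fun x _ => hd1 x)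
          (hq'c.intervalIntegrable S T)
      have hlow : ∫ x in S..T, (ε/2) ≤ ∫ x in S..T, q' x :=
        intervalIntegral.integral_mono_on hT (intervalIntegrable_const)
          (hq'c.intervalIntegrable S T) (fun x hx => hlarge x hx.1)
      rw [intervalIntegral.integral_const, hftc, smul_eq_mul] at hlow
      linarith
    refine integrable_forces q hqi (S + 2/ε) 1 one_pos fun t ht => ?_
    have h1 : q S + (t - S) * (ε/2) ≤ q t := hgrow t (by nlinarith [div_pos (show (0:ℝ)<2 by norm_num) hε])
    have h2 : (2/ε) * (ε/2) = 1 := by field_simp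
    have h3 : (t - S) * (ε/2) ≥ 1 := by nlinarith [(hq0 S).le, div_pos (show (0:ℝ)<2 by norm_num) hε]
    rw [abs_of_pos (hq0 t)]
    nlinarith [(hq0 S).le]
  -- claim b : eventually -ε < q'
  have claimB : ∀ᶠ T in atTop, -ε < q' T := by
    by_contra hcon
    have hfreq : ∃ᶠ T in atTop, q' T ≤ -ε := by
      rw [Filter.not_eventually] at hcon
      exact hcon.mono fun T hT => not_lt.1 hT
    have hall : ∀ S, S₀ ≤ S → q' S ≤ -ε/2 := by
      intro S hS
      obtain ⟨T, hT, hTle⟩ := (Filter.frequently_atTop.1 hfreq) S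
      have := key S T hT
      have h2 := hS₀ S hS
      linarith
    have hdecr : ∀ T, S₀ ≤ T → q T ≤ q S₀ + (T - S₀) * (-ε/2) := by
      intro T hT
      have hftc : ∫ x in S₀..T, q' x = q T - q S₀ :=
        intervalIntegral.integral_eq_sub_of_hasDerivAt (fun x _ => hd1 x)
          (hq'c.intervalIntegrable S₀ T)
      have hup : ∫ x in S₀..T, q' x ≤ ∫ x in S₀..T, (-ε/2) :=
        intervalIntegral.integral_mono_on hT (hq'c.intervalIntegrable S₀ T)
          intervalIntegrable_const (fun x hx => hall x hx.1)
      rw [intervalIntegral.integral_const, smul_eq_mul] at hup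
      linarith
    set T := S₀ + (2 * q S₀)/ε + 1 with hTdef
    have hT1 : S₀ ≤ T := by
      have : 0 ≤ (2 * q S₀)/ε := div_nonneg (by nlinarith [(hq0 S₀).le]) hε.le
      simp only [hTdef]; linarith
    have := hdecr T hT1
    have hq0T := hq0 T
    have h2 : (T - S₀) * (-ε/2) = -(q S₀) - ε/2 := by
      simp only [hTdef]
      field_simp
      ring
    nlinarith
  filter_upwards [claimB, eventually_ge_atTop S₀] with T hB hA
  rw [Real.norm_eq_abs, abs_lt]
  exact ⟨hB, claimA T hA⟩

lemma tendsto_zero_atTop_of_integrable (r r' : ℝ → ℝ)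
    (hd : ∀ t, HasDerivAt r (r' t) t) (hri : Integrable r) (hr'i : Integrable r') :
    Tendsto r atTop (nhds 0) := by
  have hL : Tendsto r atTop (nhds (r 0 + ∫ x in Set.Ioi (0:ℝ), r' x)) := by
    have h1 : Tendsto (fun T : ℝ => r 0 + ∫ x in (0:ℝ)..T, r' x) atTop
        (nhds (r 0 + ∫ x in Set.Ioi (0:ℝ), r' x)) :=
      tendsto_const_nhds.add (intervalIntegral_tendsto_integral_Ioi 0 hr'i.integrableOn tendsto_id)
    refine h1.congr fun T => ?_
    rw [intervalIntegral.integral_eq_sub_of_hasDerivAt (fun x _ => hd x)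
      (hr'i.intervalIntegrable)]
    ring
  set L := r 0 + ∫ x in Set.Ioi (0:ℝ), r' x with hLdef
  have hL0 : L = 0 := by
    by_contra hne
    have habs : Tendsto (fun t => |r t|) atTop (nhds |L|) := hL.abs
    have hev : ∀ᶠ t in atTop, |L|/2 ≤ |r t| := by
      have := habs.eventually_const_lt (show |L|/2 < |L| by
        have := abs_pos.2 hne; linarith)
      exact this.mono fun t ht => ht.le
    obtain ⟨A, hA⟩ := eventually_atTop.1 hev
    exact integrable_forces r hri A (|L|/2) (by positivity) hA
  rwa [hL0] at hL

lemma integral_deriv_eq_zero (r r' : ℝ → ℝ)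
    (hd : ∀ t, HasDerivAt r (r' t) t) (hri : Integrable r) (hr'i : Integrable r') :
    ∫ t, r' t = 0 := by
  have htop : Tendsto r atTop (nhds 0) := tendsto_zero_atTop_of_integrable r r' hd hri hr'i
  have hbot : Tendsto r atBot (nhds 0) := by
    have h1 : Tendsto (fun t => r (-t)) atTop (nhds 0) :=
      tendsto_zero_atTop_of_integrable (fun t => r (-t)) (fun t => -r' (-t))
        (hasDerivAt_comp_neg hd) (integrable_comp_neg hri) (integrable_comp_neg hr'i).neg
    have h2 := h1.comp tendsto_neg_atBot_atTop
    refine h2.congr fun t => ?_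
    simp [Function.comp]
  have t1 : Tendsto (fun R : ℝ => ∫ x in (-R)..R, r' x) atTop (nhds (∫ t, r' t)) :=
    intervalIntegral_tendsto_integral hr'i tendsto_neg_atTop_atBot tendsto_id
  have t2 : Tendsto (fun R : ℝ => ∫ x in (-R)..R, r' x) atTop (nhds 0) := by
    have h2 : Tendsto (fun R : ℝ => r R - r (-R)) atTop (nhds (0 - 0)) :=
      htop.sub (hbot.comp tendsto_neg_atTop_atBot)
    rw [sub_zero] at h2
    refine h2.congr fun R => ?_
    rw [intervalIntegral.integral_eq_sub_of_hasDerivAt (fun x _ => hd x)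
      (hr'i.intervalIntegrable)]
  exact tendsto_nhds_unique t1 t2

/-- Master 1-D lemma: for `q = exp (-ψ)` integrable with `ψ'' q` integrable, the score
is square-integrable with `∫ ψ'² q = ∫ ψ'' q`, and `∫ ψ' q = 0`. -/
lemma oneDim (ψ ψ' ψ'' : ℝ → ℝ)
    (hd1 : ∀ t, HasDerivAt ψ (ψ' t) t) (hd2 : ∀ t, HasDerivAt ψ' (ψ'' t) t)
    (hψ''c : Continuous ψ'')
    (hqi : Integrable (fun t => Real.exp (-ψ t)))
    (hψ''i : Integrable (fun t => ψ'' t * Real.exp (-ψ t))) :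
    Integrable (fun t => ψ' t ^ 2 * Real.exp (-ψ t)) ∧
    (∫ t, ψ' t ^ 2 * Real.exp (-ψ t)) = (∫ t, ψ'' t * Real.exp (-ψ t)) ∧
    (∫ t, ψ' t * Real.exp (-ψ t)) = 0 := by
  set q : ℝ → ℝ := fun t => Real.exp (-ψ t) with hqdef
  set q' : ℝ → ℝ := fun t => -ψ' t * q t with hq'def
  set q'' : ℝ → ℝ := fun t => (ψ' t ^ 2 - ψ'' t) * q t with hq''def
  have hq0 : ∀ t, 0 < q t := fun t => Real.exp_pos _
  have hψc : Continuous ψ := continuous_iff_continuousAt.2 fun t =>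
    (hd1 t).differentiableAt.continuousAt
  have hψ'c : Continuous ψ' := continuous_iff_continuousAt.2 fun t =>
    (hd2 t).differentiableAt.continuousAt
  have hqc : Continuous q := (hψc.neg).rexp
  have hdq : ∀ t, HasDerivAt q (q' t) t := by
    intro t
    have := ((hd1 t).neg).exp
    simpa [hq'def, hqdef, mul_comm] using this
  have hdq' : ∀ t, HasDerivAt q' (q'' t) t := by
    intro t
    have := ((hd2 t).neg).mul (hdq t)
    refine this.congr_deriv ?_
    simp only [hq''def, hq'def, Pi.neg_apply]
    ring
  have hq'c : Continuous q' := (hψ'c.neg).mul hqc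
  have hq''c : Continuous q'' := ((hψ'c.pow 2).sub hψ''c).mul hqc
  set h : ℝ → ℝ := fun t => |ψ'' t * q t| with hhdef
  have hh : Integrable h := hψ''i.abs
  have hh0 : ∀ t, 0 ≤ h t := fun t => abs_nonneg _
  have hbd : ∀ t, -h t ≤ q'' t := by
    intro t
    have h1 : -(ψ'' t * q t) ≤ q'' t := by
      have : 0 ≤ ψ' t ^ 2 * q t := by positivity
      simp only [hq''def]; nlinarith
    calc -h t ≤ -(ψ'' t * q t) := by simp only [hhdef]; exact neg_le_neg (le_abs_self _)
    _ ≤ q'' t := h1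
  have htop : Tendsto q' atTop (nhds 0) :=
    deriv_tendsto_zero_atTop q q' q'' h hdq hdq' hq''c hq0 hqi hh hh0 hbd
  have hbot : Tendsto q' atBot (nhds 0) := by
    have h1 : Tendsto (fun t => -q' (-t)) atTop (nhds 0) := by
      refine deriv_tendsto_zero_atTop (fun t => q (-t)) (fun t => -q' (-t))
        (fun t => q'' (-t)) (fun t => h (-t)) (hasDerivAt_comp_neg hdq) ?_
        (hq''c.comp continuous_neg) (fun t => hq0 _) (integrable_comp_neg hqi)
        (integrable_comp_neg hh) (fun t => hh0 _) (fun t => hbd _)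
      intro t
      have := hasDerivAt_comp_neg (g := q') (g' := q'') hdq' t
      simpa using this.fun_neg
    have h2 : Tendsto (fun t => q' (-t)) atTop (nhds 0) := by
      have := h1.neg
      rw [neg_zero] at this
      refine this.congr fun t => by ring
    have h3 := h2.comp tendsto_neg_atBot_atTop
    refine h3.congr fun t => ?_
    simp [Function.comp]
  -- FTC limit of ∫ q'' over symmetric intervals
  have hq''lim : Tendsto (fun R : ℝ => ∫ x in (-R)..R, q'' x) atTop (nhds 0) := by
    have h2 : Tendsto (fun R : ℝ => q' R - q' (-R)) atTop (nhds (0 - 0)) :=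
      htop.sub (hbot.comp tendsto_neg_atTop_atBot)
    rw [sub_zero] at h2
    refine h2.congr fun R => ?_
    rw [intervalIntegral.integral_eq_sub_of_hasDerivAt (fun x _ => hdq' x)
      (hq''c.intervalIntegrable _ _)]
  have hψ''lim : Tendsto (fun R : ℝ => ∫ x in (-R)..R, ψ'' x * q x) atTop
      (nhds (∫ t, ψ'' t * q t)) :=
    intervalIntegral_tendsto_integral hψ''i tendsto_neg_atTop_atBot tendsto_id
  have hsq_c : Continuous fun t => ψ' t ^ 2 * q t := (hψ'c.pow 2).mul hqc
  have hsplit : ∀ R : ℝ, (∫ x in (-R)..R, ψ' x ^ 2 * q x)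
      = (∫ x in (-R)..R, q'' x) + ∫ x in (-R)..R, ψ'' x * q x := by
    intro R
    rw [← intervalIntegral.integral_add (g := fun x => ψ'' x * q x) (hq''c.intervalIntegrable _ _)
      ((hψ''c.mul hqc).intervalIntegrable _ _)]
    refine intervalIntegral.integral_congr fun x _ => ?_
    simp only [hq''def]; ring
  have hsqlim : Tendsto (fun R : ℝ => ∫ x in (-R)..R, ψ' x ^ 2 * q x) atTop
      (nhds (0 + ∫ t, ψ'' t * q t)) := by
    refine (hq''lim.add hψ''lim).congr fun R => (hsplit R).symm
  rw [zero_add] at hsqlim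
  have hsqint : Integrable (fun t => ψ' t ^ 2 * q t) := by
    refine integrable_of_intervalIntegral_norm_tendsto (∫ t, ψ'' t * q t)
      (fun R : ℝ => hsq_c.integrableOn_Ioc) tendsto_neg_atTop_atBot tendsto_id ?_
    refine hsqlim.congr fun R => ?_
    refine intervalIntegral.integral_congr fun x _ => ?_
    rw [Real.norm_eq_abs, abs_of_nonneg (by positivity)]
  have hsqval : (∫ t, ψ' t ^ 2 * q t) = ∫ t, ψ'' t * q t := by
    have := intervalIntegral_tendsto_integral hsqint tendsto_neg_atTop_atBot tendsto_id
    exact tendsto_nhds_unique this hsqlim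
  -- ∫ ψ' q = 0
  have hq'i : Integrable q' := by
    refine Integrable.mono' ((hqi.add hsqint).div_const 2) hq'c.aestronglyMeasurable
      (ae_of_all _ fun t => ?_)
    rw [Real.norm_eq_abs]
    have h1 : |q' t| = |ψ' t| * q t := by
      simp only [hq'def]
      rw [abs_mul, abs_neg, abs_of_pos (hq0 t)]
    have h2 : |ψ' t| ≤ (1 + ψ' t ^ 2) / 2 := by nlinarith [sq_nonneg (|ψ' t| - 1), sq_abs (ψ' t)]
    have h3 : |ψ' t| * q t ≤ (1 + ψ' t ^ 2) / 2 * q t :=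
      mul_le_mul_of_nonneg_right h2 (hq0 t).le
    rw [h1]
    calc |ψ' t| * q t ≤ (1 + ψ' t ^ 2) / 2 * q t := h3
      _ = (q t + ψ' t ^ 2 * q t) / 2 := by ring
  have hq'zero : ∫ t, q' t = 0 := integral_deriv_eq_zero q q' hdq hqi hq'i
  have hscore : (∫ t, ψ' t * q t) = 0 := by
    have h1 : (∫ t, ψ' t * q t) = -∫ t, q' t := by
      rw [← integral_neg]
      refine integral_congr_ae (ae_of_all _ fun t => ?_)
      simp only [hq'def]; ring
    rw [h1, hq'zero, neg_zero]
  exact ⟨hsqint, hsqval, hscore⟩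


noncomputable section

variable {n : ℕ}

local notation "X" => EuclideanSpace ℝ (Fin (n+1))

/-- The structural splitting of Euclidean space along a unit direction `e`. -/
def lineEquiv (e : X) : (ℝ × (Fin n → ℝ)) ≃ᵐ X :=
  ((MeasurableEquiv.piFinSuccAbove (fun _ : Fin (n+1) => ℝ) 0).symm.trans
    (MeasurableEquiv.toLp 2 (Fin (n+1) → ℝ))).trans
    ((Submodule.reflection (ℝ ∙ (e - EuclideanSpace.single 0 (1:ℝ)))ᗮ).symm.toHomeomorph.toMeasurableEquiv)

lemma lineEquiv_measurePreserving (e : X) :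
    MeasurePreserving (lineEquiv e) volume volume := by
  have mp1 := (volume_preserving_piFinSuccAbove (fun _ : Fin (n+1) => ℝ) 0).symm
  have mp2 := (EuclideanSpace.volume_preserving_symm_measurableEquiv_toLp (Fin (n+1))).symm
  have mp3 := (Submodule.reflection (ℝ ∙ (e - EuclideanSpace.single 0 (1:ℝ)))ᗮ).symm.measurePreserving
  exact mp3.comp (mp2.comp mp1)

lemma lineEquiv_add (e : X) (he : ‖e‖ = 1) (t s : ℝ) (y : Fin n → ℝ) :
    lineEquiv e (t + s, y) = lineEquiv e (t, y) + s • e := by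
  set R := Submodule.reflection (ℝ ∙ (e - EuclideanSpace.single 0 (1:ℝ)))ᗮ with hR
  have hRe : R e = EuclideanSpace.single 0 (1:ℝ) := by
    refine Submodule.reflection_sub ?_
    rw [he, EuclideanSpace.norm_single]; simp
  have hRs : R.symm (EuclideanSpace.single 0 (1:ℝ)) = e := by
    rw [← hRe]; exact R.symm_apply_apply e
  have key : ((MeasurableEquiv.toLp 2 (Fin (n+1) → ℝ))
        ((MeasurableEquiv.piFinSuccAbove (fun _ : Fin (n+1) => ℝ) 0).symm (t + s, y)))
      = ((MeasurableEquiv.toLp 2 (Fin (n+1) → ℝ))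
        ((MeasurableEquiv.piFinSuccAbove (fun _ : Fin (n+1) => ℝ) 0).symm (t, y)))
        + s • EuclideanSpace.single 0 (1:ℝ) := by
    ext j
    induction j using Fin.cases with
    | zero => simp [MeasurableEquiv.piFinSuccAbove_symm_apply, MeasurableEquiv.coe_toLp,
        EuclideanSpace.single_apply]
    | succ k => simp [MeasurableEquiv.piFinSuccAbove_symm_apply, MeasurableEquiv.coe_toLp,
        EuclideanSpace.single_apply, Fin.succ_ne_zero]
  have expand : ∀ z : ℝ × (Fin n → ℝ), lineEquiv e z
      = R.symm ((MeasurableEquiv.toLp 2 (Fin (n+1) → ℝ))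
        ((MeasurableEquiv.piFinSuccAbove (fun _ : Fin (n+1) => ℝ) 0).symm z)) := fun z => rfl
  rw [expand, expand, key, map_add, LinearIsometryEquiv.map_smul, hRs]

lemma lineEquiv_line (e : X) (he : ‖e‖ = 1) (t : ℝ) (y : Fin n → ℝ) :
    lineEquiv e (t, y) = lineEquiv e (0, y) + t • e := by
  simpa using lineEquiv_add e he 0 t y

lemma hasDerivAt_line {g : EuclideanSpace ℝ (Fin (n+1)) → ℝ} (hg : Differentiable ℝ g)
    (x0 e : EuclideanSpace ℝ (Fin (n+1))) (t : ℝ) :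
    HasDerivAt (fun t : ℝ => g (x0 + t • e)) (fderiv ℝ g (x0 + t • e) e) t := by
  have h1 : HasDerivAt (fun t : ℝ => x0 + t • e) e t := by
    simpa using ((hasDerivAt_id t).smul_const e).const_add x0
  exact (hg (x0 + t • e)).hasFDerivAt.comp_hasDerivAt t h1

set_option maxHeartbeats 2000000 in
lemma core (φ f : X → ℝ) (hφ : ContDiff ℝ 2 φ) (hf : Differentiable ℝ f)
    (e : X) (he : ‖e‖ = 1)
    (p : X → ℝ) (hp : ∀ x, p x = Real.exp (-φ x))
    (hpi : Integrable p)
    (hD2 : Integrable (fun x => fderiv ℝ (fun z => fderiv ℝ φ z e) x e * p x))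
    (hf2 : Integrable (fun x => f x ^ 2 * p x))
    (hfp : Integrable (fun x => f x * p x))
    (hdf : Integrable (fun x => fderiv ℝ f x e * p x)) :
    Integrable (fun x => (fderiv ℝ φ x e) ^ 2 * p x) ∧
    (∫ x, (fderiv ℝ φ x e) ^ 2 * p x) = (∫ x, fderiv ℝ (fun z => fderiv ℝ φ z e) x e * p x) ∧
    Integrable (fun x => fderiv ℝ φ x e * p x) ∧
    (∫ x, fderiv ℝ φ x e * p x) = 0 ∧
    Integrable (fun x => f x * fderiv ℝ φ x e * p x) ∧
    (∫ x, f x * fderiv ℝ φ x e * p x) = ∫ x, fderiv ℝ f x e * p x := by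
  classical
  have hφd : Differentiable ℝ φ := hφ.differentiable two_ne_zero
  set s : X → ℝ := fun x => fderiv ℝ φ x e with hsdef
  have hs1 : ContDiff ℝ 1 s := by
    exact (ContinuousLinearMap.apply ℝ ℝ e).contDiff.comp (hφ.fderiv_right (by norm_num : (1:WithTop ℕ∞)+1 ≤ 2))
  have hsd : Differentiable ℝ s := hs1.differentiable one_ne_zero
  have hscont : Continuous s := hs1.continuous
  set D2 : X → ℝ := fun x => fderiv ℝ s x e with hD2def
  have hD2cont : Continuous D2 :=
    (ContinuousLinearMap.apply ℝ ℝ e).continuous.comp (hs1.continuous_fderiv one_ne_zero)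
  have hpc : Continuous p := by
    rw [funext hp]; exact (hφ.continuous.neg).rexp
  have hp0 : ∀ x, 0 < p x := fun x => by rw [hp x]; exact Real.exp_pos _
  set Φ := lineEquiv (n := n) e with hΦdef
  have hmp : MeasurePreserving Φ volume volume := lineEquiv_measurePreserving e
  have hemb : MeasurableEmbedding Φ := Φ.measurableEmbedding
  have hline : ∀ t y, Φ (t, y) = Φ (0, y) + t • e := fun t y => lineEquiv_line e he t y
  have hprodvol : (volume : Measure (ℝ × (Fin n → ℝ))) = (volume.prod volume) := rfl
  -- transfer helpers
  have comp_int : ∀ {G : X → ℝ}, Integrable G →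
      Integrable (fun z : ℝ × (Fin n → ℝ) => G (Φ z)) (Measure.prod volume volume) := by
    intro G hG
    rw [← hprodvol]
    exact (hmp.integrable_comp_emb hemb).mpr hG
  have comp_int_rev : ∀ {G : X → ℝ},
      Integrable (fun z : ℝ × (Fin n → ℝ) => G (Φ z)) (Measure.prod volume volume) →
      Integrable G := by
    intro G hG
    rw [← hprodvol] at hG
    exact (hmp.integrable_comp_emb hemb).mp hG
  have comp_eq : ∀ (G : X → ℝ), (∫ z : ℝ × (Fin n → ℝ), G (Φ z) ∂(Measure.prod volume volume))
      = ∫ x, G x := by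
    intro G
    rw [← hprodvol]
    exact hmp.integral_comp hemb G
  -- the five integrands
  set P2 : X → ℝ := fun x => s x ^ 2 * p x with hP2def
  set PD : X → ℝ := fun x => D2 x * p x with hPDdef
  set PS : X → ℝ := fun x => s x * p x with hPSdef
  set PF : X → ℝ := fun x => f x * s x * p x with hPFdef
  set PDF : X → ℝ := fun x => fderiv ℝ f x e * p x with hPDFdef
  have hA : Integrable (fun z : ℝ × (Fin n → ℝ) => PD (Φ z)) (Measure.prod volume volume) :=
    comp_int hD2
  have hB : Integrable (fun z : ℝ × (Fin n → ℝ) => p (Φ z)) (Measure.prod volume volume) :=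
    comp_int hpi
  have hsliceA := hA.prod_left_ae
  have hsliceB := hB.prod_left_ae
  -- main slice facts
  have good : ∀ᵐ y ∂(volume : Measure (Fin n → ℝ)),
      (Integrable fun t => P2 (Φ (t, y))) ∧
      (∫ t, P2 (Φ (t, y))) = (∫ t, PD (Φ (t, y))) ∧
      (∫ t, PS (Φ (t, y))) = 0 := by
    filter_upwards [hsliceA, hsliceB] with y hAy hBy
    set x0 := Φ (0, y) with hx0
    have hfun : ∀ (G : X → ℝ), (fun t => G (Φ (t, y))) = fun t => G (x0 + t • e) :=
      fun G => funext fun t => by rw [hline t y]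
    set ψ : ℝ → ℝ := fun t => φ (x0 + t • e) with hψdef
    set ψ' : ℝ → ℝ := fun t => s (x0 + t • e) with hψ'def
    set ψ'' : ℝ → ℝ := fun t => D2 (x0 + t • e) with hψ''def
    have hpq : (fun t => p (x0 + t • e)) = fun t => Real.exp (-ψ t) :=
      funext fun t => hp _
    have hd1 : ∀ t, HasDerivAt ψ (ψ' t) t := fun t => hasDerivAt_line hφd x0 e t
    have hd2 : ∀ t, HasDerivAt ψ' (ψ'' t) t := fun t => hasDerivAt_line hsd x0 e t
    have hψ''c : Continuous ψ'' := by
      have hlc : Continuous (fun t : ℝ => x0 + t • e) :=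
        continuous_const.add (continuous_id.smul continuous_const)
      exact hD2cont.comp hlc
    have hqi : Integrable (fun t => Real.exp (-ψ t)) := by
      rw [← hpq, ← hfun (fun x => p x)]
      exact hBy
    have hψ''i : Integrable (fun t => ψ'' t * Real.exp (-ψ t)) := by
      have h0 := hAy
      rw [hfun PD] at h0
      exact h0.congr (ae_of_all _ fun t => by simp only [hPDdef]; rw [hp])
    obtain ⟨h1, h2, h3⟩ := oneDim ψ ψ' ψ'' hd1 hd2 hψ''c hqi hψ''i
    refine ⟨?_, ?_, ?_⟩
    · rw [hfun P2]
      exact h1.congr (ae_of_all _ fun t => by simp only [hP2def]; rw [hp])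
    · rw [hfun P2, hfun PD]
      simp only [hP2def, hPDdef]
      rw [show (fun t => s (x0+t•e) ^2 * p (x0+t•e)) = fun t => ψ' t ^2 * Real.exp (-ψ t) by
          funext t; rw [hp],
        show (fun t => D2 (x0+t•e) * p (x0+t•e)) = fun t => ψ'' t * Real.exp (-ψ t) by
          funext t; rw [hp]]
      exact h2
    · rw [hfun PS]
      simp only [hPSdef]
      rw [show (fun t => s (x0+t•e) * p (x0+t•e)) = fun t => ψ' t * Real.exp (-ψ t) by
          funext t; rw [hp]]
      exact h3
  -- global integrability of P2
  have hP2c : Continuous P2 := (hscont.pow 2).mul hpc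
  have hP2meas : AEStronglyMeasurable (fun z : ℝ × (Fin n → ℝ) => P2 (Φ z))
      (Measure.prod volume volume) :=
    ((hP2c.measurable).comp Φ.measurable).aestronglyMeasurable
  have hP2prod : Integrable (fun z : ℝ × (Fin n → ℝ) => P2 (Φ z))
      (Measure.prod volume volume) := by
    refine (integrable_prod_iff' hP2meas).2 ⟨?_, ?_⟩
    · filter_upwards [good] with y hy; exact hy.1
    · refine Integrable.mono' hA.integral_norm_prod_right
        (hP2meas.norm.prod_swap.integral_prod_right') ?_
      filter_upwards [good, hsliceA] with y hy hAy
      have h1 : (fun t => ‖P2 (Φ (t, y))‖) = fun t => P2 (Φ (t, y)) := by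
        funext t
        rw [Real.norm_eq_abs, abs_of_nonneg]
        simp only [hP2def]
        exact mul_nonneg (sq_nonneg _) (hp0 _).le
      have hnn : 0 ≤ ∫ t, P2 (Φ (t, y)) :=
        integral_nonneg fun t => mul_nonneg (sq_nonneg _) (hp0 _).le
      calc ‖∫ t, ‖P2 (Φ (t, y))‖‖ = ∫ t, P2 (Φ (t, y)) := by
            rw [h1, Real.norm_eq_abs, abs_of_nonneg hnn]
        _ = ∫ t, PD (Φ (t, y)) := hy.2.1
        _ ≤ ∫ t, ‖PD (Φ (t, y))‖ := integral_mono hAy hAy.norm fun t => le_abs_self _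
  have hP2 : Integrable P2 := comp_int_rev hP2prod
  have hval : (∫ x, P2 x) = ∫ x, PD x := by
    rw [← comp_eq P2, ← comp_eq PD, integral_prod_symm _ hP2prod, integral_prod_symm _ hA]
    refine integral_congr_ae ?_
    filter_upwards [good] with y hy
    exact hy.2.1
  -- PS : score integrable with zero integral
  have hPSc : Continuous PS := hscont.mul hpc
  have hPS : Integrable PS := by
    refine Integrable.mono' ((hpi.add hP2).div_const 2) hPSc.aestronglyMeasurable
      (ae_of_all _ fun x => ?_)
    rw [Real.norm_eq_abs]
    have h2 : |s x| ≤ (1 + s x ^ 2) / 2 := by nlinarith [sq_nonneg (|s x| - 1), sq_abs (s x)]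
    have h3 : |PS x| = |s x| * p x := by
      simp only [hPSdef]; rw [abs_mul, abs_of_pos (hp0 x)]
    rw [h3]
    calc |s x| * p x ≤ (1 + s x ^ 2) / 2 * p x := mul_le_mul_of_nonneg_right h2 (hp0 x).le
      _ = (p x + P2 x) / 2 := by simp only [hP2def]; ring
  have hPSzero : (∫ x, PS x) = 0 := by
    have hPSprod : Integrable (fun z : ℝ × (Fin n → ℝ) => PS (Φ z))
        (Measure.prod volume volume) := comp_int hPS
    rw [← comp_eq PS, integral_prod_symm _ hPSprod,
      show (0:ℝ) = ∫ (_ : Fin n → ℝ), (0:ℝ) by simp]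
    refine integral_congr_ae ?_
    filter_upwards [good] with y hy
    exact hy.2.2
  -- PF : correlation integrable
  have hPFc : Continuous PF := (hf.continuous.mul hscont).mul hpc
  have hPF : Integrable PF := by
    refine Integrable.mono' ((hf2.add hP2).div_const 2) hPFc.aestronglyMeasurable
      (ae_of_all _ fun x => ?_)
    rw [Real.norm_eq_abs]
    have h3 : |PF x| = |f x| * |s x| * p x := by
      simp only [hPFdef]; rw [abs_mul, abs_mul, abs_of_pos (hp0 x)]
    rw [h3]
    have h4 : |f x| * |s x| ≤ (f x ^ 2 + s x ^ 2) / 2 := by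
      nlinarith [sq_nonneg (|f x| - |s x|), sq_abs (f x), sq_abs (s x)]
    calc |f x| * |s x| * p x ≤ (f x ^ 2 + s x ^ 2) / 2 * p x :=
          mul_le_mul_of_nonneg_right h4 (hp0 x).le
      _ = (f x ^ 2 * p x + P2 x) / 2 := by simp only [hP2def]; ring
  -- the integration-by-parts identity
  have hsub : Integrable (fun x => PDF x - PF x) := hdf.sub hPF
  have hzero : (∫ x, (PDF x - PF x)) = 0 := by
    have hprod : Integrable (fun z : ℝ × (Fin n → ℝ) => PDF (Φ z) - PF (Φ z))
        (Measure.prod volume volume) := comp_int hsub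
    rw [← comp_eq (fun x => PDF x - PF x)]
    rw [integral_prod_symm _ hprod,
      show (0:ℝ) = ∫ (_ : Fin n → ℝ), (0:ℝ) by simp]
    refine integral_congr_ae ?_
    filter_upwards [(comp_int hfp).prod_left_ae, (comp_int hdf).prod_left_ae,
      (comp_int hPF).prod_left_ae] with y hy1 hy2 hy3
    set x0 := Φ (0, y) with hx0
    have hpt2 : ∀ t : ℝ, Φ (t, y) = x0 + t • e := fun t => hline t y
    simp only [hpt2] at hy1 hy2 hy3 ⊢
    have hdr : ∀ t, HasDerivAt (fun t : ℝ => f (x0 + t • e) * p (x0 + t • e))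
        (PDF (x0 + t • e) - PF (x0 + t • e)) t := by
      intro t
      have h1 := hasDerivAt_line hf x0 e t
      have h2 : HasDerivAt (fun t : ℝ => p (x0 + t • e))
          (Real.exp (-φ (x0 + t • e)) * -(s (x0 + t • e))) t := by
        have h3 := ((hasDerivAt_line hφd x0 e t).neg).exp
        have h4 : (fun t : ℝ => p (x0 + t • e)) = fun t : ℝ => Real.exp (-φ (x0 + t • e)) :=
          funext fun t => hp _
        rw [h4]
        exact h3
      have h5 := h1.mul h2
      refine h5.congr_deriv ?_
      simp only [hPDFdef, hPFdef]
      rw [hp (x0 + t • e)]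
      ring
    have hri : Integrable (fun t : ℝ => f (x0 + t • e) * p (x0 + t • e)) := hy1
    have hr'i : Integrable (fun t : ℝ => PDF (x0 + t • e) - PF (x0 + t • e)) := hy2.sub hy3
    exact integral_deriv_eq_zero _ _ hdr hri hr'i
  have hfinal : (∫ x, PF x) = ∫ x, PDF x := by
    have := integral_sub hdf hPF
    rw [hzero] at this
    linarith [this.symm]
  exact ⟨hP2, hval, hPS, hPSzero, hPF, hfinal⟩

open MeasureTheory Filter Set Matrix in
lemma euclid_decomp {d : ℕ} (x : EuclideanSpace ℝ (Fin d)) :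
    x = ∑ i, x i • EuclideanSpace.single i (1:ℝ) := by
  ext j
  have : (∑ i, x i • EuclideanSpace.single i (1:ℝ)) j
      = ∑ i, x i * (if j = i then (1:ℝ) else 0) := by
    rw [WithLp.ofLp_sum, Finset.sum_apply]
    refine Finset.sum_congr rfl fun i _ => ?_
    simp [EuclideanSpace.single_apply]
  rw [this]
  simp

lemma pd_def (g : EuclideanSpace ℝ (Fin d) → ℝ) (i : Fin d) (x : EuclideanSpace ℝ (Fin d)) :
    pd g i x = fderiv ℝ g x (EuclideanSpace.single i (1 : ℝ)) := rfl

lemma hess_def (g : EuclideanSpace ℝ (Fin d) → ℝ) (x : EuclideanSpace ℝ (Fin d)) (i j : Fin d) :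
    hess g x i j = pd (pd g j) i x := rfl

lemma fderiv_apply_eq_sum (g : EuclideanSpace ℝ (Fin d) → ℝ) (x u : EuclideanSpace ℝ (Fin d)) :
    fderiv ℝ g x u = ∑ i, u i * pd g i x := by
  conv_lhs => rw [euclid_decomp u]
  rw [map_sum]
  exact Finset.sum_congr rfl fun i _ => by rw [_root_.map_smul]; rfl

end

end AuxCR

set_option maxHeartbeats 1000000

/-- Cramér–Rao / Brascamp–Lieb type bound.  Let `p = exp (−φ)` be a
differentiable probability density on `ℝ^d` with finite positive-definite expected Hessian
`E[H_φ]`, and let `f` be differentiable with `f(x) p(x − θ) → 0` as `‖x‖ → ∞` for each `θ`.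
Then `Var(f) ≥ (E ∇f)ᵀ (E H_φ)⁻¹ (E ∇f)`. -/
theorem cramer_rao_variance_lower_bound
    (φ f : EuclideanSpace ℝ (Fin d) → ℝ)
    (p : EuclideanSpace ℝ (Fin d) → ℝ)
    (hp : ∀ x, p x = Real.exp (-φ x))
    (hφ : ContDiff ℝ 2 φ) (hf : Differentiable ℝ f)
    (hdens : ∫ x, p x = 1)
    (hdecay : ∀ θ : EuclideanSpace ℝ (Fin d),
      Filter.Tendsto (fun x => f x * p (x - θ)) (Filter.cocompact _) (nhds 0))
    (hHint : ∀ i j, Integrable (fun x => hess φ x i j * p x))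
    (hgint : ∀ i, Integrable (fun x => pd f i x * p x))
    (hfint : Integrable (fun x => f x * p x))
    (hf2int : Integrable (fun x => f x ^ 2 * p x))
    (EH : Matrix (Fin d) (Fin d) ℝ)
    (hEH : EH = Matrix.of fun i j => ∫ x, hess φ x i j * p x)
    (hEHpd : EH.PosDef)
    (Eg : Fin d → ℝ) (hEg : ∀ i, Eg i = ∫ x, pd f i x * p x) :
    Eg ⬝ᵥ (EH⁻¹ *ᵥ Eg) ≤ (∫ x, f x ^ 2 * p x) - (∫ x, f x * p x) ^ 2 := by
  classical
  have hpi : Integrable p := by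
    by_contra hni
    rw [MeasureTheory.integral_undef hni] at hdens
    exact one_ne_zero hdens.symm
  have hp0 : ∀ x, 0 < p x := fun x => by rw [hp x]; exact Real.exp_pos _
  set m := ∫ x, f x * p x with hm
  have varNonneg : 0 ≤ (∫ x, f x ^ 2 * p x) - m ^ 2 := by
    have h1a : Integrable (fun x => f x ^ 2 * p x - 2 * m * (f x * p x)) volume :=
      hf2int.sub (hfint.const_mul (2 * m))
    have h1 : Integrable (fun x => f x ^ 2 * p x - 2 * m * (f x * p x) + m ^ 2 * p x) volume :=
      h1a.add (hpi.const_mul (m ^ 2))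
    have h2 : (∫ x, (f x ^ 2 * p x - 2 * m * (f x * p x) + m ^ 2 * p x))
        = (∫ x, f x ^ 2 * p x) - 2 * m * (∫ x, f x * p x) + m ^ 2 * (∫ x, p x) := by
      rw [integral_add h1a (hpi.const_mul (m ^ 2)),
        integral_sub hf2int (hfint.const_mul (2 * m)), integral_const_mul, integral_const_mul]
    have h3 : 0 ≤ ∫ x, (f x ^ 2 * p x - 2 * m * (f x * p x) + m ^ 2 * p x) := by
      rw [show (fun x => f x ^ 2 * p x - 2 * m * (f x * p x) + m ^ 2 * p x)
          = fun x => (f x - m) ^ 2 * p x from funext fun x => by ring]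
      exact integral_nonneg fun x => mul_nonneg (sq_nonneg _) (hp0 x).le
    rw [h2, hdens, ← hm] at h3
    nlinarith [h3]
  by_cases hv0 : EH⁻¹ *ᵥ Eg = 0
  · rw [hv0, dotProduct_zero]
    exact varNonneg
  · have hd0 : d ≠ 0 := by
      rintro rfl
      exact hv0 (Subsingleton.elim _ _)
    obtain ⟨n, rfl⟩ : ∃ n, d = n + 1 := ⟨d - 1, by omega⟩
    set v : Fin (n+1) → ℝ := EH⁻¹ *ᵥ Eg with hv
    have hEHv : EH *ᵥ v = Eg := by
      rw [hv, Matrix.mulVec_mulVec, Matrix.mul_nonsing_inv _ hEHpd.det_pos.ne'.isUnit,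
        Matrix.one_mulVec]
    set u : EuclideanSpace ℝ (Fin (n+1)) := (WithLp.equiv 2 (Fin (n+1) → ℝ)).symm v with hu
    have hu0 : u ≠ 0 := by
      intro h
      apply hv0
      have : (WithLp.equiv 2 (Fin (n+1) → ℝ)) u = v := by rw [hu]; simp
      rw [← this, h]
      simp
    set c := ‖u‖ with hc'
    have hc : 0 < c := norm_pos_iff.mpr hu0
    set e : EuclideanSpace ℝ (Fin (n+1)) := c⁻¹ • u with he'
    have he : ‖e‖ = 1 := by rw [he', hc']; exact norm_smul_inv_norm hu0
    set w : Fin (n+1) → ℝ := fun i => c⁻¹ * v i with hw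
    have hew : ∀ i, e i = w i := by
      intro i
      rw [he', hw, hu]
      simp
    have P1 : ∀ (g : EuclideanSpace ℝ (Fin (n+1)) → ℝ) x,
        fderiv ℝ g x e = ∑ i, w i * pd g i x := by
      intro g x
      rw [fderiv_apply_eq_sum g x e]
      exact Finset.sum_congr rfl fun i _ => by rw [hew]
    -- derivative of f in direction e
    have hdfeq : (fun x => fderiv ℝ f x e * p x) = fun x => ∑ i, w i * (pd f i x * p x) := by
      funext x
      rw [P1 f x, Finset.sum_mul]
      exact Finset.sum_congr rfl fun i _ => by ring
    have hdf : Integrable (fun x => fderiv ℝ f x e * p x) := by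
      rw [hdfeq]; exact integrable_finset_sum _ fun i _ => (hgint i).const_mul _
    have hdfval : (∫ x, fderiv ℝ f x e * p x) = ∑ i, w i * Eg i := by
      rw [hdfeq, integral_finset_sum _ fun i _ => (hgint i).const_mul _]
      refine Finset.sum_congr rfl fun i _ => ?_
      rw [integral_const_mul, ← hEg i]
    -- second derivative in direction e
    have hpd1 : ∀ j, Differentiable ℝ (pd φ j) := fun j =>
      (((ContinuousLinearMap.apply ℝ ℝ (EuclideanSpace.single j (1:ℝ))).contDiff.comp
        (hφ.fderiv_right (by norm_num : (1:WithTop ℕ∞)+1 ≤ 2))).differentiable one_ne_zero)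
    have hsfun_eq : (fun z => fderiv ℝ φ z e) = fun z => ∑ j, w j * pd φ j z :=
      funext fun z => P1 φ z
    have hD2eq : (fun x => fderiv ℝ (fun z => fderiv ℝ φ z e) x e * p x)
        = fun x => ∑ i, ∑ j, w i * (w j * (hess φ x i j * p x)) := by
      funext x
      rw [hsfun_eq, P1 (fun z => ∑ j, w j * pd φ j z) x]
      have hin : ∀ i, pd (fun z => ∑ j, w j * pd φ j z) i x = ∑ j, w j * hess φ x i j := by
        intro i
        rw [pd_def, fderiv_fun_sum fun j _ => ((hpd1 j x).const_mul (w j))]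
        rw [ContinuousLinearMap.sum_apply]
        refine Finset.sum_congr rfl fun j _ => ?_
        rw [fderiv_const_mul (hpd1 j x) (w j)]
        rw [ContinuousLinearMap.smul_apply, smul_eq_mul]
        rfl
      rw [show (∑ i, w i * pd (fun z => ∑ j, w j * pd φ j z) i x)
          = ∑ i, w i * ∑ j, w j * hess φ x i j from
        Finset.sum_congr rfl fun i _ => by rw [hin i]]
      rw [Finset.sum_mul]
      refine Finset.sum_congr rfl fun i _ => ?_
      rw [Finset.mul_sum, Finset.sum_mul]
      refine Finset.sum_congr rfl fun j _ => ?_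
      ring
    have hD2 : Integrable (fun x => fderiv ℝ (fun z => fderiv ℝ φ z e) x e * p x) := by
      rw [hD2eq]
      exact integrable_finset_sum _ fun i _ =>
        integrable_finset_sum _ fun j _ => ((hHint i j).const_mul _).const_mul _
    have hD2val : (∫ x, fderiv ℝ (fun z => fderiv ℝ φ z e) x e * p x)
        = ∑ i, ∑ j, w i * (w j * EH i j) := by
      rw [hD2eq, integral_finset_sum _ fun i _ =>
        integrable_finset_sum _ fun j _ => ((hHint i j).const_mul _).const_mul _]
      refine Finset.sum_congr rfl fun i _ => ?_
      rw [integral_finset_sum _ fun j _ => ((hHint i j).const_mul _).const_mul _]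
      refine Finset.sum_congr rfl fun j _ => ?_
      rw [integral_const_mul, integral_const_mul]
      congr 2
      rw [hEH]
      rfl
    -- apply the core lemma
    obtain ⟨hsq, hsqval, hPS, hPSzero, hPF, hPFval⟩ :=
      core φ f hφ hf e he p hp hpi hD2 hf2int hfint hdf
    set Q := Eg ⬝ᵥ v with hQ
    have hwEg : (∑ i, w i * Eg i) = c⁻¹ * Q := by
      rw [hQ, dotProduct_comm, dotProduct, Finset.mul_sum]
      exact Finset.sum_congr rfl fun i _ => by rw [hw]; ring
    have hvEHv : v ⬝ᵥ (EH *ᵥ v) = Q := by rw [hEHv, hQ, dotProduct_comm]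
    have hwEHw : (∑ i, ∑ j, w i * (w j * EH i j)) = c⁻¹ * (c⁻¹ * Q) := by
      have hexp : v ⬝ᵥ (EH *ᵥ v) = ∑ i, ∑ j, v i * (EH i j * v j) := by
        show (∑ i, v i * ∑ j, EH i j * v j) = _
        exact Finset.sum_congr rfl fun i _ => Finset.mul_sum _ _ _
      rw [← hvEHv, hexp, Finset.mul_sum, Finset.mul_sum]
      refine Finset.sum_congr rfl fun i _ => ?_
      rw [Finset.mul_sum, Finset.mul_sum]
      refine Finset.sum_congr rfl fun j _ => ?_
      rw [hw]
      ring
    have hsqval2 : (∫ x, (fderiv ℝ φ x e) ^ 2 * p x) = c⁻¹ * (c⁻¹ * Q) := by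
      rw [hsqval, hD2val, hwEHw]
    have hPFval2 : (∫ x, f x * fderiv ℝ φ x e * p x) = c⁻¹ * Q := by
      rw [hPFval, hdfval, hwEg]
    -- the quadratic expansion
    have hT2 : Integrable (fun x => 2 * m * (f x * p x)) volume := hfint.const_mul (2 * m)
    have hT3 : Integrable (fun x => m ^ 2 * p x) volume := hpi.const_mul (m ^ 2)
    have hT4 : Integrable (fun x => c ^ 2 * ((fderiv ℝ φ x) e ^ 2 * p x)) volume :=
      hsq.const_mul (c ^ 2)
    have hT5 : Integrable (fun x => 2 * c * (f x * fderiv ℝ φ x e * p x)) volume :=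
      hPF.const_mul (2 * c)
    have hT6 : Integrable (fun x => 2 * m * c * (fderiv ℝ φ x e * p x)) volume :=
      hPS.const_mul (2 * m * c)
    have hI12 : Integrable (fun x => f x ^ 2 * p x - 2 * m * (f x * p x)) volume :=
      hf2int.sub hT2
    have hI123 : Integrable (fun x => f x ^ 2 * p x - 2 * m * (f x * p x) + m ^ 2 * p x)
      volume := hI12.add hT3
    have hI1234 : Integrable (fun x => f x ^ 2 * p x - 2 * m * (f x * p x) + m ^ 2 * p x
      + c ^ 2 * ((fderiv ℝ φ x) e ^ 2 * p x)) volume := hI123.add hT4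
    have hI12345 : Integrable (fun x => f x ^ 2 * p x - 2 * m * (f x * p x) + m ^ 2 * p x
      + c ^ 2 * ((fderiv ℝ φ x) e ^ 2 * p x) - 2 * c * (f x * fderiv ℝ φ x e * p x))
      volume := hI1234.sub hT5
    have hG : Integrable (fun x => f x ^ 2 * p x - 2 * m * (f x * p x) + m ^ 2 * p x
      + c ^ 2 * ((fderiv ℝ φ x) e ^ 2 * p x) - 2 * c * (f x * fderiv ℝ φ x e * p x)
      + 2 * m * c * (fderiv ℝ φ x e * p x)) volume := hI12345.add hT6
    have hGval : (∫ x, (f x ^ 2 * p x - 2 * m * (f x * p x) + m ^ 2 * p x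
          + c ^ 2 * ((fderiv ℝ φ x) e ^ 2 * p x) - 2 * c * (f x * fderiv ℝ φ x e * p x)
          + 2 * m * c * (fderiv ℝ φ x e * p x)))
        = (∫ x, f x ^ 2 * p x) - 2 * m * m + m ^ 2 * 1
          + c ^ 2 * (c⁻¹ * (c⁻¹ * Q)) - 2 * c * (c⁻¹ * Q) + 2 * m * c * 0 := by
      rw [integral_add hI12345 hT6, integral_sub hI1234 hT5, integral_add hI123 hT4,
        integral_add hI12 hT3, integral_sub hf2int hT2,
        integral_const_mul, integral_const_mul, integral_const_mul, integral_const_mul,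
        integral_const_mul, hdens, ← hm, hsqval2, hPFval2, hPSzero]
    have hGnn : 0 ≤ ∫ x, (f x ^ 2 * p x - 2 * m * (f x * p x) + m ^ 2 * p x
          + c ^ 2 * ((fderiv ℝ φ x) e ^ 2 * p x) - 2 * c * (f x * fderiv ℝ φ x e * p x)
          + 2 * m * c * (fderiv ℝ φ x e * p x)) := by
      rw [show (fun x => f x ^ 2 * p x - 2 * m * (f x * p x) + m ^ 2 * p x
          + c ^ 2 * ((fderiv ℝ φ x) e ^ 2 * p x) - 2 * c * (f x * fderiv ℝ φ x e * p x)
          + 2 * m * c * (fderiv ℝ φ x e * p x))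
          = fun x => (f x - m - c * fderiv ℝ φ x e) ^ 2 * p x from funext fun x => by ring]
      exact integral_nonneg fun x => mul_nonneg (sq_nonneg _) (hp0 x).le
    rw [hGval] at hGnn
    have hc2 : c ^ 2 * (c⁻¹ * (c⁻¹ * Q)) = Q := by
      field_simp
    have hc3 : 2 * c * (c⁻¹ * Q) = 2 * Q := by
      field_simp
    rw [hc2, hc3] at hGnn
    show Q ≤ (∫ x, f x ^ 2 * p x) - m ^ 2
    nlinarith [hGnn]
end

section
/- Let A and B be random positive-definite d×d symmetric matrices, and define Var(M) = E‖M − EM‖_op². Suppose for some δ ∈ [0, 2^{−1/2}) that sqrt(Var(A)) < δ·λ_min(E A) and sqrt(Var(B)) < δ·λ_min(E B), where λ_min denotes the smallest eigenvalue. Then tr(E[AB]) ≥ (1 − δ²)·tr(E[A]·E[B]). -/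
open Matrix MeasureTheory

/-- The `ℓ²`-operator norm of a real square matrix. -/
noncomputable def opNorm {d : ℕ} (M : Matrix (Fin d) (Fin d) ℝ) : ℝ :=
  ‖(Matrix.toEuclideanCLM (𝕜 := ℝ) (n := Fin d)) M‖

/-- Entrywise expectation of a random matrix. -/
noncomputable def matExp {Ω : Type*} [MeasurableSpace Ω] (μ : Measure Ω) {d : ℕ}
    (A : Ω → Matrix (Fin d) (Fin d) ℝ) : Matrix (Fin d) (Fin d) ℝ :=
  Matrix.of fun i j => ∫ ω, A ω i j ∂μ

/-- `Var(M) = E‖M − EM‖_op²` for a random matrix `M`. -/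
noncomputable def matVar {Ω : Type*} [MeasurableSpace Ω] (μ : Measure Ω) {d : ℕ}
    (A : Ω → Matrix (Fin d) (Fin d) ℝ) : ℝ :=
  ∫ ω, opNorm (A ω - matExp μ A) ^ 2 ∂μ

/-- The minimal eigenvalue of a Hermitian matrix. -/
noncomputable def lambdaMin {d : ℕ} {M : Matrix (Fin d) (Fin d) ℝ}
    (hM : M.IsHermitian) : ℝ :=
  ⨅ i : Fin d, hM.eigenvalues i

section Aux

open scoped Matrix.Norms.L2Operator

lemma opNorm_eq {d : ℕ} (M : Matrix (Fin d) (Fin d) ℝ) : opNorm M = ‖M‖ := rfl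

lemma coord_le_norm {d : ℕ} (v : EuclideanSpace ℝ (Fin d)) (i : Fin d) : |v i| ≤ ‖v‖ := by
  rw [EuclideanSpace.norm_eq]
  calc |v i| = Real.sqrt (|v i|^2) := by rw [Real.sqrt_sq_eq_abs, abs_abs]
  _ ≤ _ := by
      apply Real.sqrt_le_sqrt
      exact Finset.single_le_sum (f := fun j => ‖v j‖^2) (fun j _ => by positivity)
        (Finset.mem_univ i)

lemma entry_le_opNorm {d : ℕ} (M : Matrix (Fin d) (Fin d) ℝ) (i j : Fin d) : |M i j| ≤ ‖M‖ := by
  have hx : ‖(EuclideanSpace.single j (1:ℝ) : EuclideanSpace ℝ (Fin d))‖ = 1 := by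
    simp [EuclideanSpace.norm_single]
  have h := M.l2_opNorm_mulVec (EuclideanSpace.single j (1:ℝ))
  rw [hx, mul_one] at h
  refine le_trans ?_ (le_trans (coord_le_norm _ i) h)
  have : ((EuclideanSpace.equiv (Fin d) ℝ).symm <| M *ᵥ (EuclideanSpace.single j (1:ℝ))) i
      = M i j := by
    simp [Matrix.mulVec, dotProduct, EuclideanSpace.single_apply]
  rw [this]

lemma abs_trace_mul_le {d : ℕ} (M N : Matrix (Fin d) (Fin d) ℝ) :
    |(M * N).trace| ≤ (d : ℝ) * (‖M‖ * ‖N‖) := by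
  calc |(M * N).trace| ≤ ∑ i : Fin d, |(M * N) i i| := by
        rw [Matrix.trace]; exact Finset.abs_sum_le_sum_abs _ _
  _ ≤ ∑ _i : Fin d, ‖M‖ * ‖N‖ := by
        refine Finset.sum_le_sum fun i _ => ?_
        exact le_trans (entry_le_opNorm _ i i) (M.l2_opNorm_mul N)
  _ = (d : ℝ) * (‖M‖ * ‖N‖) := by simp [Finset.sum_const, nsmul_eq_mul]

lemma lambdaMin_le {d : ℕ} {M : Matrix (Fin d) (Fin d) ℝ} (hM : M.IsHermitian) (i : Fin d) :
    lambdaMin hM ≤ hM.eigenvalues i :=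
  ciInf_le (Finite.bddBelow_range _) i

lemma diag_nonneg_of_psd {d : ℕ} {M : Matrix (Fin d) (Fin d) ℝ} (hM : M.PosSemidef) (i : Fin d) :
    0 ≤ M i i := by
  simpa [dotProduct, Matrix.mulVec, Pi.single_apply, Finset.sum_ite_eq,
    Finset.sum_ite_eq'] using hM.dotProduct_mulVec_nonneg (Pi.single i 1)

lemma trace_nonneg_of_psd {d : ℕ} {M : Matrix (Fin d) (Fin d) ℝ} (hM : M.PosSemidef) :
    0 ≤ M.trace := by
  rw [Matrix.trace]
  exact Finset.sum_nonneg fun i _ => diag_nonneg_of_psd hM i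

open scoped MatrixOrder in
lemma trace_mul_nonneg_of_psd {d : ℕ} {P Q : Matrix (Fin d) (Fin d) ℝ}
    (hP : P.PosSemidef) (hQ : Q.PosSemidef) : 0 ≤ (P * Q).trace := by
  have key : P = CFC.sqrt P * CFC.sqrt P :=
    (CFC.sqrt_mul_sqrt_self P (Matrix.nonneg_iff_posSemidef.mpr hP)).symm
  have hS : (CFC.sqrt P).PosSemidef := Matrix.nonneg_iff_posSemidef.mp (CFC.sqrt_nonneg P)
  rw [key, mul_assoc, Matrix.trace_mul_comm, mul_assoc]
  have := (hQ.mul_mul_conjTranspose_same (CFC.sqrt P))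
  rw [hS.isHermitian.eq] at this
  exact le_trans (trace_nonneg_of_psd this) (le_of_eq (by rw [mul_assoc]))

lemma herm_trace_eq {d : ℕ} {M : Matrix (Fin d) (Fin d) ℝ} (hM : M.IsHermitian) :
    M.trace = ∑ i, hM.eigenvalues i := by
  conv_lhs => rw [hM.spectral_theorem, Unitary.conjStarAlgAut_apply]
  rw [Matrix.trace_mul_cycle,
    Matrix.mem_unitaryGroup_iff'.mp (hM.eigenvectorUnitary).2, one_mul]
  simp [Matrix.trace_diagonal]

lemma herm_sub_smul_psd {d : ℕ} {M : Matrix (Fin d) (Fin d) ℝ} (hM : M.IsHermitian) :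
    (M - lambdaMin hM • (1 : Matrix (Fin d) (Fin d) ℝ)).PosSemidef := by
  have key : M - lambdaMin hM • (1 : Matrix (Fin d) (Fin d) ℝ)
      = (hM.eigenvectorUnitary : Matrix (Fin d) (Fin d) ℝ)
        * diagonal (fun i => hM.eigenvalues i - lambdaMin hM)
        * (star (hM.eigenvectorUnitary : Matrix (Fin d) (Fin d) ℝ)) := by
    have h1 : (diagonal (fun i => hM.eigenvalues i - lambdaMin hM) : Matrix (Fin d) (Fin d) ℝ)
        = diagonal (RCLike.ofReal ∘ hM.eigenvalues) - lambdaMin hM • 1 := by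
      rw [Matrix.smul_one_eq_diagonal, ← Matrix.diagonal_sub]
      rfl
    rw [h1, mul_sub, sub_mul,
      ← Unitary.conjStarAlgAut_apply (S := ℝ) (x := diagonal (RCLike.ofReal ∘ hM.eigenvalues)),
      ← hM.spectral_theorem]
    congr 1
    rw [Matrix.mul_smul, Matrix.smul_mul, mul_one,
      Matrix.mem_unitaryGroup_iff.mp (hM.eigenvectorUnitary).2]
  rw [key, Matrix.star_eq_conjTranspose]
  exact PosSemidef.mul_mul_conjTranspose_same
    (PosSemidef.diagonal (fun i => sub_nonneg.mpr (lambdaMin_le hM i))) _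

lemma lambdaMin_nonneg_of_psd {d : ℕ} {M : Matrix (Fin d) (Fin d) ℝ} (hM : M.PosSemidef) :
    0 ≤ lambdaMin hM.1 :=
  Real.iInf_nonneg fun i => hM.eigenvalues_nonneg i

lemma trace_mul_ge_of_psd {d : ℕ} {P Q : Matrix (Fin d) (Fin d) ℝ}
    (hP : P.PosSemidef) (hQ : Q.PosSemidef) :
    (d : ℝ) * lambdaMin hP.1 * lambdaMin hQ.1 ≤ (P * Q).trace := by
  set a := lambdaMin hP.1 with ha'
  set b := lambdaMin hQ.1 with hb'
  have ha : 0 ≤ a := lambdaMin_nonneg_of_psd hP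
  have hb : 0 ≤ b := lambdaMin_nonneg_of_psd hQ
  have h0 : 0 ≤ ((P - a • 1) * (Q - b • 1)).trace :=
    trace_mul_nonneg_of_psd (herm_sub_smul_psd hP.1) (herm_sub_smul_psd hQ.1)
  have hexp : ((P - a • 1) * (Q - b • 1)).trace
      = (P * Q).trace - a * Q.trace - b * P.trace + a * b * d := by
    simp [sub_mul, mul_sub, Matrix.trace_sub, Matrix.smul_mul, Matrix.mul_smul,
      Matrix.trace_smul, smul_smul, Matrix.trace_one, smul_eq_mul]
    ring
  have hP' : (d : ℝ) * a ≤ P.trace := by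
    rw [herm_trace_eq hP.1]
    calc (d : ℝ) * a = ∑ _i : Fin d, a := by simp [Finset.sum_const, nsmul_eq_mul]
    _ ≤ _ := Finset.sum_le_sum fun i _ => lambdaMin_le hP.1 i
  have hQ' : (d : ℝ) * b ≤ Q.trace := by
    rw [herm_trace_eq hQ.1]
    calc (d : ℝ) * b = ∑ _i : Fin d, b := by simp [Finset.sum_const, nsmul_eq_mul]
    _ ≤ _ := Finset.sum_le_sum fun i _ => lambdaMin_le hQ.1 i
  nlinarith [mul_le_mul_of_nonneg_left hQ' ha, mul_le_mul_of_nonneg_left hP' hb]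

lemma matExp_posSemidef {Ω : Type*} [MeasurableSpace Ω] {μ : Measure Ω} {d : ℕ}
    {A : Ω → Matrix (Fin d) (Fin d) ℝ} (hApd : ∀ ω, (A ω).PosDef)
    (hAm : ∀ i j, Integrable (fun ω => A ω i j) μ) (hEA : (matExp μ A).IsHermitian) :
    (matExp μ A).PosSemidef := by
  refine PosSemidef.of_dotProduct_mulVec_nonneg hEA fun x => ?_
  have hint : ∀ i j, Integrable (fun ω => x i * (A ω i j * x j)) μ :=
    fun i j => ((hAm i j).mul_const _).const_mul _
  have hkey : dotProduct (star x) (matExp μ A *ᵥ x)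
      = ∫ ω, dotProduct (star x) (A ω *ᵥ x) ∂μ := by
    simp only [star_trivial, dotProduct, Matrix.mulVec, matExp, Matrix.of_apply,
      Finset.mul_sum]
    rw [integral_finset_sum _ (fun i _ => integrable_finset_sum _ (fun j _ => hint i j))]
    refine Finset.sum_congr rfl fun i _ => ?_
    rw [integral_finset_sum _ (fun j _ => hint i j)]
    refine Finset.sum_congr rfl fun j _ => ?_
    rw [integral_const_mul, integral_mul_const]
  rw [hkey]
  exact integral_nonneg fun ω => ((hApd ω).posSemidef).dotProduct_mulVec_nonneg x

end Aux

set_option maxHeartbeats 2000000 in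
/-- If `√Var(A) < δ λ_min(EA)` and `√Var(B) < δ λ_min(EB)` for some
`δ ∈ [0, 2^{-1/2})`, where `A, B` are random positive-definite symmetric matrices, then
`tr (E[AB]) ≥ (1 − δ²) tr (E[A] E[B])`. -/
theorem trace_exp_mul_ge_of_low_skew
    {Ω : Type*} [MeasurableSpace Ω] (μ : Measure Ω) [IsProbabilityMeasure μ]
    {d : ℕ} (A B : Ω → Matrix (Fin d) (Fin d) ℝ)
    (hApd : ∀ ω, (A ω).PosDef) (hBpd : ∀ ω, (B ω).PosDef)
    (hAm : ∀ i j, Integrable (fun ω => A ω i j) μ)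
    (hBm : ∀ i j, Integrable (fun ω => B ω i j) μ)
    (hABint : Integrable (fun ω => (A ω * B ω).trace) μ)
    (hA2 : Integrable (fun ω => opNorm (A ω - matExp μ A) ^ 2) μ)
    (hB2 : Integrable (fun ω => opNorm (B ω - matExp μ B) ^ 2) μ)
    (hEA : (matExp μ A).IsHermitian) (hEB : (matExp μ B).IsHermitian)
    (δ : ℝ) (hδ0 : 0 ≤ δ) (hδ1 : δ < (Real.sqrt 2)⁻¹)
    (hA : Real.sqrt (matVar μ A) < δ * lambdaMin hEA)
    (hB : Real.sqrt (matVar μ B) < δ * lambdaMin hEB) :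
    (1 - δ ^ 2) * (matExp μ A * matExp μ B).trace ≤ ∫ ω, (A ω * B ω).trace ∂μ := by
  classical
  open scoped Matrix.Norms.L2Operator in
  set EA := matExp μ A with hEAdef
  set EB := matExp μ B with hEBdef
  set a := lambdaMin hEA with hadef
  set b := lambdaMin hEB with hbdef
  have hδa : 0 < δ * a := lt_of_le_of_lt (Real.sqrt_nonneg _) hA
  have hδb : 0 < δ * b := lt_of_le_of_lt (Real.sqrt_nonneg _) hB
  have hδpos : 0 < δ := by
    rcases lt_or_eq_of_le hδ0 with h | h
    · exact h
    · exfalso; rw [← h] at hδa; simp at hδa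
  have hapos : 0 < a := by nlinarith
  have hbpos : 0 < b := by nlinarith
  set t := b / a with htdef
  have htpos : 0 < t := div_pos hbpos hapos
  -- the three auxiliary integrable functions
  have eq1 : (fun ω => (EA * B ω).trace) = fun ω => ∑ i, ∑ j, EA i j * B ω j i := by
    funext ω; simp [Matrix.trace, Matrix.mul_apply, Matrix.diag]
  have eq2 : (fun ω => (A ω * EB).trace) = fun ω => ∑ i, ∑ j, A ω i j * EB j i := by
    funext ω; simp [Matrix.trace, Matrix.mul_apply, Matrix.diag]
  have hf1 : Integrable (fun ω => (EA * B ω).trace) μ := by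
    rw [eq1]
    exact integrable_finset_sum _ fun i _ => integrable_finset_sum _
      fun j _ => (hBm j i).const_mul _
  have hf2 : Integrable (fun ω => (A ω * EB).trace) μ := by
    rw [eq2]
    exact integrable_finset_sum _ fun i _ => integrable_finset_sum _
      fun j _ => (hAm i j).mul_const _
  have htr_eq : (EA * EB).trace = ∑ i, ∑ j, EA i j * EB j i := by
    simp [Matrix.trace, Matrix.mul_apply, Matrix.diag]
  have hif1 : ∫ ω, (EA * B ω).trace ∂μ = (EA * EB).trace := by
    rw [eq1, integral_finset_sum _ (fun i _ => integrable_finset_sum _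
      (fun j _ => (hBm j i).const_mul (EA i j)))]
    rw [Finset.sum_congr rfl fun i _ => integral_finset_sum _
      (fun j _ => (hBm j i).const_mul (EA i j))]
    rw [htr_eq]
    refine Finset.sum_congr rfl fun i _ => Finset.sum_congr rfl fun j _ => ?_
    rw [integral_const_mul]
    rfl
  have hif2 : ∫ ω, (A ω * EB).trace ∂μ = (EA * EB).trace := by
    rw [eq2, integral_finset_sum _ (fun i _ => integrable_finset_sum _
      (fun j _ => (hAm i j).mul_const _))]
    rw [Finset.sum_congr rfl fun i _ => integral_finset_sum _
      (fun j _ => (hAm i j).mul_const _)]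
    rw [htr_eq]
    refine Finset.sum_congr rfl fun i _ => Finset.sum_congr rfl fun j _ => ?_
    rw [integral_mul_const]
    rfl
  have hgeq : ∀ ω, ((A ω - EA) * (B ω - EB)).trace
      = (A ω * B ω).trace - (EA * B ω).trace - (A ω * EB).trace + (EA * EB).trace := by
    intro ω
    simp only [sub_mul, mul_sub, Matrix.trace_sub]
    ring
  have hg : Integrable (fun ω => ((A ω - EA) * (B ω - EB)).trace) μ := by
    have h2 : (fun ω => ((A ω - EA) * (B ω - EB)).trace)
        = fun ω => (A ω * B ω).trace - (EA * B ω).trace - (A ω * EB).trace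
            + (EA * EB).trace := funext hgeq
    rw [h2]
    exact ((hABint.sub hf1).sub hf2).add (integrable_const _)
  have hsplit : ∫ ω, (A ω * B ω).trace ∂μ
      = (EA * EB).trace + ∫ ω, ((A ω - EA) * (B ω - EB)).trace ∂μ := by
    have h2 : (fun ω => (A ω * B ω).trace)
        = fun ω => (((A ω - EA) * (B ω - EB)).trace + (EA * B ω).trace + (A ω * EB).trace)
            - (EA * EB).trace := by
      funext ω; rw [hgeq ω]; ring
    have i1 : Integrable (fun ω => ((A ω - EA) * (B ω - EB)).trace + (EA * B ω).trace) μ :=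
      hg.add hf1
    have i2 : Integrable (fun ω => ((A ω - EA) * (B ω - EB)).trace + (EA * B ω).trace
        + (A ω * EB).trace) μ := i1.add hf2
    rw [h2, integral_sub i2 (integrable_const _), integral_add i1 hf2, integral_add hg hf1,
      hif1, hif2, integral_const]
    simp [measure_univ]
    ring
  -- pointwise bound
  have hbound : ∀ ω, -(((A ω - EA) * (B ω - EB)).trace)
      ≤ (d : ℝ)/2 * (t * opNorm (A ω - EA) ^ 2 + t⁻¹ * opNorm (B ω - EB) ^ 2) := by
    intro ω
    have h1 := abs_trace_mul_le (A ω - EA) (B ω - EB)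
    have hamgm : 2 * (‖A ω - EA‖ * ‖B ω - EB‖)
        ≤ t * ‖A ω - EA‖^2 + t⁻¹ * ‖B ω - EB‖^2 := by
      have h2 := sq_nonneg (t * ‖A ω - EA‖ - ‖B ω - EB‖)
      have h3 : t * t⁻¹ = 1 := mul_inv_cancel₀ (ne_of_gt htpos)
      nlinarith [norm_nonneg (A ω - EA), norm_nonneg (B ω - EB), htpos]
    rw [opNorm_eq, opNorm_eq]
    have h4 := mul_le_mul_of_nonneg_left hamgm (show (0:ℝ) ≤ (d:ℝ)/2 by positivity)
    have h5 := neg_abs_le (((A ω - EA) * (B ω - EB)).trace)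
    nlinarith []
  have hrhs : Integrable (fun ω => (d : ℝ)/2 * (t * opNorm (A ω - EA) ^ 2
      + t⁻¹ * opNorm (B ω - EB) ^ 2)) μ :=
    ((hA2.const_mul t).add (hB2.const_mul t⁻¹)).const_mul _
  have hineq : ∫ ω, -(((A ω - EA) * (B ω - EB)).trace) ∂μ
      ≤ ∫ ω, (d : ℝ)/2 * (t * opNorm (A ω - EA) ^ 2 + t⁻¹ * opNorm (B ω - EB) ^ 2) ∂μ :=
    integral_mono hg.neg hrhs hbound
  have hrhs_val : ∫ ω, (d : ℝ)/2 * (t * opNorm (A ω - EA) ^ 2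
      + t⁻¹ * opNorm (B ω - EB) ^ 2) ∂μ
      = (d : ℝ)/2 * (t * matVar μ A + t⁻¹ * matVar μ B) := by
    rw [integral_const_mul, integral_add (hA2.const_mul t) (hB2.const_mul t⁻¹),
      integral_const_mul, integral_const_mul]
    rfl
  clear_value t a b EB EA
  -- variance bounds
  have hVA0 : 0 ≤ matVar μ A := integral_nonneg fun ω => sq_nonneg _
  have hVB0 : 0 ≤ matVar μ B := integral_nonneg fun ω => sq_nonneg _
  have hVA : matVar μ A ≤ (δ * a) ^ 2 := by
    have := Real.sq_sqrt hVA0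
    nlinarith [Real.sqrt_nonneg (matVar μ A)]
  have hVB : matVar μ B ≤ (δ * b) ^ 2 := by
    have := Real.sq_sqrt hVB0
    nlinarith [Real.sqrt_nonneg (matVar μ B)]
  have hta : t * matVar μ A ≤ δ ^ 2 * (a * b) := by
    have h1 : t * matVar μ A ≤ t * (δ * a) ^ 2 :=
      mul_le_mul_of_nonneg_left hVA htpos.le
    have h2 : t * (δ * a) ^ 2 = δ ^ 2 * (a * b) := by
      rw [htdef]; field_simp
    linarith
  have htb : t⁻¹ * matVar μ B ≤ δ ^ 2 * (a * b) := by
    have h1 : t⁻¹ * matVar μ B ≤ t⁻¹ * (δ * b) ^ 2 :=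
      mul_le_mul_of_nonneg_left hVB (inv_nonneg.mpr htpos.le)
    have h2 : t⁻¹ * (δ * b) ^ 2 = δ ^ 2 * (a * b) := by
      rw [htdef, inv_div]; field_simp
    linarith
  have hgb : -((d : ℝ) * δ ^ 2 * (a * b)) ≤ ∫ ω, ((A ω - EA) * (B ω - EB)).trace ∂μ := by
    rw [integral_neg] at hineq
    rw [hrhs_val] at hineq
    have h6 : t * matVar μ A + t⁻¹ * matVar μ B ≤ 2 * (δ ^ 2 * (a * b)) := by linarith
    have h7 := mul_le_mul_of_nonneg_left h6 (show (0:ℝ) ≤ (d : ℝ)/2 by positivity)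
    have h8 : (d : ℝ)/2 * (2 * (δ ^ 2 * (a * b))) = (d : ℝ) * δ ^ 2 * (a * b) := by ring
    linarith
  have htr : (d : ℝ) * a * b ≤ (EA * EB).trace := by
    subst hEAdef hEBdef
    have hPA : (matExp μ A).PosSemidef := matExp_posSemidef hApd hAm hEA
    have hPB : (matExp μ B).PosSemidef := matExp_posSemidef hBpd hBm hEB
    rw [hadef, hbdef]
    exact trace_mul_ge_of_psd hPA hPB
  have hδ2 : 0 ≤ δ ^ 2 := sq_nonneg δ
  have hfin := mul_le_mul_of_nonneg_left htr hδ2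
  have e1 : δ ^ 2 * ((d : ℝ) * a * b) = (d : ℝ) * δ ^ 2 * (a * b) := by ring
  have e2 : (1 - δ ^ 2) * (EA * EB).trace
      = (EA * EB).trace - δ ^ 2 * (EA * EB).trace := by ring
  linarith
end
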